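/- Let P = {(x,y) ∈ [0,1]^n × ℝ^d : Ax + By ≤ b} and suppose x̄ ∈ {0,1}^n is not in the projection of P onto the x-variables, and a projected certificate exists. Then there exists λ ∈ ℝ^m with λ ≥ 0, λB = 0, λA x̄ > λb, and the support of λ has size at most d+1. -/

import Mathlib

/-- One reduction step: given `l ≥ 0` and a direction `μ` supported in the
support of `l` with a positive entry, we can subtract a nonnegative multiple
of `μ` from `l`, staying nonnegative, killing some coordinate of the support,
and not enlarging the support. -/
lemma small_support_step {m : ℕ} (l μ : Fin m → ℝ) (hl : ∀ r, 0 ≤ l r)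
    (hμl : ∀ r, μ r ≠ 0 → l r ≠ 0) (hpos : ∃ r, 0 < μ r) :
    ∃ t : ℝ, 0 ≤ t ∧ (∀ r, 0 ≤ l r - t * μ r) ∧
      (∃ r, l r ≠ 0 ∧ l r - t * μ r = 0) ∧
      (∀ r, l r - t * μ r ≠ 0 → l r ≠ 0) := by
  classical
  obtain ⟨r₁, hr₁⟩ := hpos
  set T : Finset (Fin m) := Finset.univ.filter (fun r => 0 < μ r) with hT
  have hTne : T.Nonempty := ⟨r₁, by simp [hT, hr₁]⟩
  set t : ℝ := T.inf' hTne (fun r => l r / μ r) with ht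
  have ht0 : 0 ≤ t := by
    apply Finset.le_inf'
    intro r hr
    have hμr : 0 < μ r := by simpa [hT] using hr
    exact div_nonneg (hl r) hμr.le
  have hub : ∀ r, 0 < μ r → t * μ r ≤ l r := by
    intro r hr
    have : t ≤ l r / μ r := Finset.inf'_le _ (by simp [hT, hr])
    calc t * μ r ≤ (l r / μ r) * μ r := by nlinarith
      _ = l r := by field_simp
  refine ⟨t, ht0, ?_, ?_, ?_⟩
  · intro r
    rcases le_or_gt (μ r) 0 with h | h
    · nlinarith [hl r, mul_nonpos_of_nonneg_of_nonpos ht0 h]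
    · linarith [hub r h]
  · obtain ⟨r₀, hr₀T, hr₀⟩ := Finset.exists_mem_eq_inf' hTne (fun r => l r / μ r)
    have hμr₀ : 0 < μ r₀ := by simpa [hT] using hr₀T
    refine ⟨r₀, hμl r₀ (ne_of_gt hμr₀), ?_⟩
    rw [← ht] at hr₀
    rw [hr₀]
    field_simp
    ring
  · intro r hr
    intro hlr
    apply hr
    have : μ r = 0 := by
      by_contra h
      exact hμl r h hlr
    simp [hlr, this]

/-- If `x̄ ∈ {0,1}^n` is not in the projection of
`P = {(x,y) ∈ [0,1]^n × ℝ^d : Ax + By ≤ b}` onto the binary variables and a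
projected certificate exists, then there exists a (minimal) projected
certificate whose multiplier vector has support of size at most `d+1`. -/
theorem small_support_certificate (m n d : ℕ)
    (A : Matrix (Fin m) (Fin n) ℝ) (B : Matrix (Fin m) (Fin d) ℝ)
    (b : Fin m → ℝ)
    (xb : Fin n → ℝ) (hxb : ∀ i, xb i = 0 ∨ xb i = 1)
    (hnotproj : ¬ ∃ y : Fin d → ℝ, ∀ r, (A.mulVec xb + B.mulVec y) r ≤ b r)
    (hcert : ∃ l : Fin m → ℝ, (∀ r, 0 ≤ l r) ∧ Matrix.vecMul l B = 0 ∧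
      dotProduct l b < dotProduct l (A.mulVec xb)) :
    ∃ l : Fin m → ℝ, (∀ r, 0 ≤ l r) ∧ Matrix.vecMul l B = 0 ∧
      dotProduct l b < dotProduct l (A.mulVec xb) ∧
      (Finset.univ.filter (fun r => l r ≠ 0)).card ≤ d + 1 := by
  classical
  obtain ⟨l0, hl0, hB0, hc0⟩ := hcert
  clear hnotproj hxb
  set c : Fin m → ℝ := fun r => A.mulVec xb r - b r with hc
  -- the key quantity: the certificate condition is `0 < ∑ r, l r * c r`
  have dot_iff : ∀ l : Fin m → ℝ,
      (dotProduct l b < dotProduct l (A.mulVec xb)) ↔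
      0 < ∑ r, l r * c r := by
    intro l
    simp only [dotProduct, hc, mul_sub, Finset.sum_sub_distrib]
    constructor <;> intro h <;> linarith
  suffices H : ∀ k (l : Fin m → ℝ),
      (Finset.univ.filter (fun r => l r ≠ 0)).card ≤ k →
      (∀ r, 0 ≤ l r) → Matrix.vecMul l B = 0 →
      dotProduct l b < dotProduct l (A.mulVec xb) →
      ∃ l' : Fin m → ℝ, (∀ r, 0 ≤ l' r) ∧ Matrix.vecMul l' B = 0 ∧
        dotProduct l' b < dotProduct l' (A.mulVec xb) ∧
        (Finset.univ.filter (fun r => l' r ≠ 0)).card ≤ d + 1 by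
    exact H _ l0 le_rfl hl0 hB0 hc0
  intro k
  induction k with
  | zero =>
    intro l hcard hl hB hlt
    exact ⟨l, hl, hB, hlt, le_trans hcard (Nat.zero_le _)⟩
  | succ k ih =>
    intro l hcard hl hB hlt
    by_cases hle : (Finset.univ.filter (fun r => l r ≠ 0)).card ≤ d + 1
    · exact ⟨l, hl, hB, hlt, hle⟩
    · push_neg at hle
      set S : Finset (Fin m) := Finset.univ.filter (fun r => l r ≠ 0) with hS
      -- the family of vectors (c r, B r) for r ∈ S is linearly dependent
      set v : Fin m → (Fin (d + 1) → ℝ) := fun r => Fin.cons (c r) (B r) with hv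
      have hdep : ¬ LinearIndependent ℝ (fun r : S => v r) := by
        intro hli
        have := hli.fintype_card_le_finrank
        rw [Fintype.card_coe, Module.finrank_fin_fun] at this
        omega
      obtain ⟨g, hgsum, i₀, hgi₀⟩ := Fintype.not_linearIndependent_iff.mp hdep
      set μ : Fin m → ℝ := fun r => if h : r ∈ S then g ⟨r, h⟩ else 0 with hμ
      have hμS : ∀ r, μ r ≠ 0 → l r ≠ 0 := by
        intro r hr
        by_contra hlr
        apply hr
        have : r ∉ S := by simp [hS, hlr]
        simp [hμ, this]
      have hμsum : ∑ r, μ r • v r = 0 := by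
        rw [← Finset.sum_subset (Finset.subset_univ S)
          (by intro r _ hr; simp [hμ, hr])]
        rw [← Finset.sum_attach S (fun r => μ r • v r)]
        rw [← hgsum]
        apply Finset.sum_congr rfl
        intro r _
        simp [hμ, r.2]
      -- extract the two linear relations from hμsum
      have hμc : ∑ r, μ r * c r = 0 := by
        have := congrFun hμsum 0
        simpa [hv, Finset.sum_apply, Fin.cons_zero] using this
      have hμB : ∀ j, ∑ r, μ r * B r j = 0 := by
        intro j
        have := congrFun hμsum j.succ
        simpa [hv, Finset.sum_apply, Fin.cons_succ] using this
      have hμne : μ i₀.1 ≠ 0 := by simp [hμ, i₀.2, hgi₀]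
      -- WLOG μ has a positive entry (otherwise use -μ); handle both cases
      have key : ∀ μ' : Fin m → ℝ, (∀ r, μ' r ≠ 0 → l r ≠ 0) →
          (∑ r, μ' r * c r = 0) → (∀ j, ∑ r, μ' r * B r j = 0) →
          (∃ r, 0 < μ' r) →
          ∃ l' : Fin m → ℝ, (∀ r, 0 ≤ l' r) ∧ Matrix.vecMul l' B = 0 ∧
            dotProduct l' b < dotProduct l' (A.mulVec xb) ∧
            (Finset.univ.filter (fun r => l' r ≠ 0)).card ≤ d + 1 := by
        intro μ' hμ'S hμ'c hμ'B hμ'pos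
        obtain ⟨t, ht0, hnn, ⟨r₀, hr₀ne, hr₀zero⟩, hsupp⟩ :=
          small_support_step l μ' hl hμ'S hμ'pos
        set l' : Fin m → ℝ := fun r => l r - t * μ' r with hl'
        have hl'B : Matrix.vecMul l' B = 0 := by
          funext j
          have hlBj : ∑ r, l r * B r j = 0 := by
            have := congrFun hB j
            simpa [Matrix.vecMul, dotProduct] using this
          simp only [Matrix.vecMul, dotProduct, hl', Pi.zero_apply]
          have : ∑ r, (l r - t * μ' r) * B r j
              = (∑ r, l r * B r j) - t * ∑ r, μ' r * B r j := by
            rw [Finset.mul_sum, ← Finset.sum_sub_distrib]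
            apply Finset.sum_congr rfl
            intro r _; ring
          rw [this, hlBj, hμ'B j]; ring
        have hl'c : ∑ r, l' r * c r = ∑ r, l r * c r := by
          have : ∑ r, (l r - t * μ' r) * c r
              = (∑ r, l r * c r) - t * ∑ r, μ' r * c r := by
            rw [Finset.mul_sum, ← Finset.sum_sub_distrib]
            apply Finset.sum_congr rfl
            intro r _; ring
          rw [hl', this, hμ'c]; ring
        have hl'lt : dotProduct l' b < dotProduct l' (A.mulVec xb) := by
          rw [dot_iff, hl'c, ← dot_iff]; exact hlt
        have hsubset : Finset.univ.filter (fun r => l' r ≠ 0) ⊂ S := by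
          constructor
          · intro r hr
            simp only [hS, Finset.mem_filter, Finset.mem_univ, true_and] at hr ⊢
            exact hsupp r hr
          · intro hsub
            have : r₀ ∈ Finset.univ.filter (fun r => l' r ≠ 0) :=
              hsub (by simp [hS, hr₀ne])
            simp only [Finset.mem_filter, Finset.mem_univ, true_and, hl'] at this
            exact this hr₀zero
        have hcard' : (Finset.univ.filter (fun r => l' r ≠ 0)).card ≤ k := by
          have := Finset.card_lt_card hsubset
          omega
        exact ih l' hcard' hnn hl'B hl'lt
      rcases lt_trichotomy (μ i₀.1) 0 with h | h | h
      · apply key (fun r => -μ r)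
        · intro r hr; apply hμS; simpa using hr
        · simp only [neg_mul, Finset.sum_neg_distrib, hμc, neg_zero]
        · intro j; simp only [neg_mul, Finset.sum_neg_distrib, hμB j, neg_zero]
        · exact ⟨i₀.1, by simpa using h⟩
      · exact absurd h hμne
      · exact key μ hμS hμc hμB ⟨i₀.1, h⟩
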